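/- Let f > 0, g > 0, and set l = −f²·√(α/(12g)) for some α > 0. Define V̄(r) = l·r² and h̄(r) = (l²/(4g))·(r⁴ + (4f/(3l))·r³ + f⁴/(3l⁴)). Then: (i) g·h̄'(r) = V̄(r)²/r + f·V̄(r) for all r > 0 (so (0, V̄, h̄) is a stationary rotationally symmetric rotating shallow water solution); (ii) h̄(−f/l) = 0 and h̄(r) > 0 for 0 ≤ r < −f/l; (iii) h̄ attains its maximum on [0, −f/l] at r = 0. -/
import Mathlib


/-- The liquid-drop profile: V̄ = l·r², h̄ the displayed quartic with
l = −f²√(α/(12g)). (i) stationary balance g·h̄' = V̄²/r + f·V̄;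
(ii) h̄ vanishes at r = −f/l and is positive on [0, −f/l);
(iii) h̄ is maximal at r = 0 on [0, −f/l]. -/
theorem liquid_drop_profile
    (f g α l : ℝ) (hf : 0 < f) (hg : 0 < g) (hα : 0 < α)
    (hl : l = -(f ^ 2 * Real.sqrt (α / (12 * g))))
    (Vbar hbar : ℝ → ℝ)
    (hV : Vbar = fun r => l * r ^ 2)
    (hh : hbar = fun r =>
      (l ^ 2 / (4 * g)) * (r ^ 4 + (4 * f / (3 * l)) * r ^ 3 + f ^ 4 / (3 * l ^ 4))) :
    (∀ r > (0 : ℝ), g * deriv hbar r = (Vbar r) ^ 2 / r + f * Vbar r) ∧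
    hbar (-f / l) = 0 ∧
    (∀ r : ℝ, 0 ≤ r → r < -f / l → 0 < hbar r) ∧
    (∀ r ∈ Set.Icc (0 : ℝ) (-f / l), hbar r ≤ hbar 0) := by
  have hsq : 0 < Real.sqrt (α / (12 * g)) :=
    Real.sqrt_pos.mpr (by positivity)
  have hl0 : l < 0 := by
    rw [hl]
    have := mul_pos (pow_pos hf 2) hsq
    linarith
  have hlne : l ≠ 0 := ne_of_lt hl0
  have hgne : g ≠ 0 := ne_of_gt hg
  -- c = -f/l > 0
  have hc : 0 < -f / l := div_pos_of_neg_of_neg (by linarith) hl0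
  refine ⟨?_, ?_, ?_, ?_⟩
  · intro r hr
    have hd : HasDerivAt hbar
        ((l ^ 2 / (4 * g)) * (4 * r ^ 3 + (4 * f / (3 * l)) * (3 * r ^ 2) + 0)) r := by
      rw [hh]
      exact (((hasDerivAt_pow 4 r).add
        (((hasDerivAt_pow 3 r).const_mul (4 * f / (3 * l))))).add
        (hasDerivAt_const r (f ^ 4 / (3 * l ^ 4)))).const_mul _ |>.congr_deriv (by
          push_cast; ring)
    rw [hd.deriv, hV]
    have hrne : r ≠ 0 := ne_of_gt hr
    field_simp
    ring
  · rw [hh]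
    field_simp
    ring
  · intro r hr0 hrc
    rw [hh]
    have key : r ^ 4 + (4 * f / (3 * l)) * r ^ 3 + f ^ 4 / (3 * l ^ 4)
        = (r - (-f / l)) ^ 2 * (r ^ 2 + (2 * (-f / l) / 3) * r + (-f / l) ^ 2 / 3) := by
      field_simp
      ring
    simp only []
    rw [key]
    have h1 : 0 < (r - (-f / l)) ^ 2 := by nlinarith
    have h2 : 0 < r ^ 2 + (2 * (-f / l) / 3) * r + (-f / l) ^ 2 / 3 := by nlinarith [mul_nonneg hr0 hc.le]
    have hl2 : 0 < l ^ 2 := by nlinarith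
    exact mul_pos (div_pos hl2 (by linarith)) (mul_pos h1 h2)
  · rintro r ⟨hr0, hrc⟩
    rw [hh]
    have key : (l ^ 2 / (4 * g)) * ((0:ℝ) ^ 4 + (4 * f / (3 * l)) * (0:ℝ) ^ 3 + f ^ 4 / (3 * l ^ 4))
        - (l ^ 2 / (4 * g)) * (r ^ 4 + (4 * f / (3 * l)) * r ^ 3 + f ^ 4 / (3 * l ^ 4))
        = (l ^ 2 / (4 * g)) * (r ^ 3 * (4 * (-f / l) / 3 - r)) := by
      field_simp
      ring
    simp only []
    have hnn : 0 ≤ (l ^ 2 / (4 * g)) * (r ^ 3 * (4 * (-f / l) / 3 - r)) := by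
      have : 0 ≤ 4 * (-f / l) / 3 - r := by linarith
      positivity
    linarith [key, hnn]
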